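/- If y₁, y₂ : ℝ → ℝ are twice differentiable on (−1,1), solve the Legendre differential equation of degree ν on (−1,1), and satisfy the normalization (1 − x²)·(y₁'(x)·y₂(x) − y₁(x)·y₂'(x)) = 1 for all x ∈ (−1,1), then for all x, ξ ∈ (−1,1): ((1 − x²)·(1 − ξ²))^(1/4) · |y₁(x)·y₂(ξ) − y₁(ξ)·y₂(x)| ≤ √(2 / (1/4 + (ν + 1/2)²)). -/

import Mathlib

open Set

lemma mono_aux {f f' : ℝ → ℝ}
    (hf : ∀ t ∈ Set.Ioo (-1:ℝ) 1, HasDerivAt f (f' t) t)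
    (hsign : ∀ t ∈ Set.Ioo (-1:ℝ) 1, 0 ≤ t * f' t)
    {a : ℝ} (ha : a ∈ Set.Ioo (-1:ℝ) 1) :
    f 0 ≤ f a := by
  obtain ⟨ha1, ha2⟩ := ha
  rcases le_total 0 a with h0 | h0
  · have hsub : Set.Icc (0:ℝ) a ⊆ Set.Ioo (-1:ℝ) 1 := fun t ht =>
      ⟨by linarith [ht.1], lt_of_le_of_lt ht.2 ha2⟩
    have hmono : MonotoneOn f (Set.Icc 0 a) := by
      apply monotoneOn_of_deriv_nonneg (convex_Icc 0 a)
      · exact fun t ht => (hf t (hsub ht)).continuousAt.continuousWithinAt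
      · intro t ht
        rw [interior_Icc] at ht
        exact ((hf t (hsub (Set.mem_Icc_of_Ioo ht))).differentiableAt).differentiableWithinAt
      · intro t ht
        rw [interior_Icc] at ht
        rw [(hf t (hsub (Set.mem_Icc_of_Ioo ht))).deriv]
        have := hsign t (hsub (Set.mem_Icc_of_Ioo ht))
        nlinarith [ht.1]
    exact hmono (Set.left_mem_Icc.2 h0) (Set.right_mem_Icc.2 h0) h0
  · have hsub : Set.Icc a (0:ℝ) ⊆ Set.Ioo (-1:ℝ) 1 := fun t ht =>
      ⟨lt_of_lt_of_le ha1 ht.1, by linarith [ht.2]⟩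
    have hmono : AntitoneOn f (Set.Icc a 0) := by
      apply antitoneOn_of_deriv_nonpos (convex_Icc a 0)
      · exact fun t ht => (hf t (hsub ht)).continuousAt.continuousWithinAt
      · intro t ht
        rw [interior_Icc] at ht
        exact ((hf t (hsub (Set.mem_Icc_of_Ioo ht))).differentiableAt).differentiableWithinAt
      · intro t ht
        rw [interior_Icc] at ht
        rw [(hf t (hsub (Set.mem_Icc_of_Ioo ht))).deriv]
        have := hsign t (hsub (Set.mem_Icc_of_Ioo ht))
        nlinarith [ht.2]
    exact hmono (Set.left_mem_Icc.2 h0) (Set.right_mem_Icc.2 h0) h0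


lemma key (c : ℝ) (hc : 0 ≤ c) (u ud udd : ℝ → ℝ)
    (hud : ∀ t ∈ Set.Ioo (-1:ℝ) 1, HasDerivAt u (ud t) t)
    (hudd : ∀ t ∈ Set.Ioo (-1:ℝ) 1, HasDerivAt ud (udd t) t)
    (hode : ∀ t ∈ Set.Ioo (-1:ℝ) 1,
      (1 - t^2) * udd t - 2*t*ud t + (c - 1/4) * u t = 0)
    (ξ : ℝ) (hξ : ξ ∈ Set.Ioo (-1:ℝ) 1) (hu0 : u ξ = 0)
    (hu1 : (1-ξ^2) * ud ξ = 1)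
    (x : ℝ) (hx : x ∈ Set.Ioo (-1:ℝ) 1) :
    Real.sqrt (1-ξ^2) * Real.sqrt (1-x^2) * (u x)^2 ≤ 4/(4*c+1) := by
  have h0mem : (0:ℝ) ∈ Set.Ioo (-1:ℝ) 1 := by norm_num
  have hpos : ∀ t ∈ Set.Ioo (-1:ℝ) 1, (0:ℝ) < 1 - t^2 := by
    intro t ht; nlinarith [ht.1, ht.2]
  set σ : ℝ → ℝ := fun t => Real.sqrt (1 - t^2) with hσdef
  have hσpos : ∀ t ∈ Set.Ioo (-1:ℝ) 1, 0 < σ t := fun t ht => Real.sqrt_pos.2 (hpos t ht)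
  have hσsq : ∀ t ∈ Set.Ioo (-1:ℝ) 1, σ t ^ 2 = 1 - t^2 := fun t ht => Real.sq_sqrt (hpos t ht).le
  set D : ℝ → ℝ := fun s => s * u s - 2 * ((1 - s^2) * ud s) with hDdef
  set P : ℝ → ℝ := fun s => 4*c*(1 - s^2) + 1 with hPdef
  have hPpos : ∀ t ∈ Set.Ioo (-1:ℝ) 1, 0 < P t := by
    intro t ht; have := hpos t ht; simp only [hPdef]; nlinarith
  set H : ℝ → ℝ := fun s => P s * (u s)^2 + (D s)^2 with hHdef
  set G : ℝ → ℝ := fun s => H s / (4 * σ s) with hGdef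
  set E : ℝ → ℝ := fun s => σ s * H s / P s with hEdef
  have h1t : ∀ t : ℝ, HasDerivAt (fun s : ℝ => 1 - s^2) (-(2*t)) t := by
    intro t; simpa using ((hasDerivAt_pow 2 t).const_sub 1)
  have hσd : ∀ t ∈ Set.Ioo (-1:ℝ) 1, HasDerivAt σ (-(2*t) / (2 * σ t)) t := by
    intro t ht; exact (h1t t).sqrt (ne_of_gt (hpos t ht))
  have hPd : ∀ t : ℝ, HasDerivAt P (4*c*(-(2*t))) t := by
    intro t; exact ((h1t t).const_mul (4*c)).add_const 1
  have hDd : ∀ t ∈ Set.Ioo (-1:ℝ) 1,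
      HasDerivAt D (1 * u t + t * ud t - 2 * ((-(2*t)) * ud t + (1 - t^2) * udd t)) t := by
    intro t ht
    exact ((hasDerivAt_id t).mul (hud t ht)).sub (((h1t t).mul (hudd t ht)).const_mul 2)
  have hHd : ∀ t ∈ Set.Ioo (-1:ℝ) 1,
      HasDerivAt H (t * ((1 - 4*c) * (u t)^2 + 4*t*(u t)*(ud t) - 4*(1-t^2)*(ud t)^2)) t := by
    intro t ht
    have raw : HasDerivAt H
        ((4*c*(-(2*t))) * (u t)^2 + P t * (2 * u t ^ 1 * ud t)
          + 2 * D t ^ 1 * (1 * u t + t * ud t - 2 * ((-(2*t)) * ud t + (1 - t^2) * udd t))) t :=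
      ((hPd t).mul ((hud t ht).pow 2)).add ((hDd t ht).pow 2)
    convert raw using 1
    have hodet := hode t ht
    simp only [hDdef, hPdef, pow_one]
    linear_combination (4 * (t * u t - 2 * ((1 - t^2) * ud t))) * hodet
  -- derivative of G
  have hGd : ∀ t ∈ Set.Ioo (-1:ℝ) 1, HasDerivAt G (t * (u t)^2 / (2 * σ t ^ 3)) t := by
    intro t ht
    have hσne : σ t ≠ 0 := ne_of_gt (hσpos t ht)
    have h4σne : (4 : ℝ) * σ t ≠ 0 := by positivity
    have raw : HasDerivAt G
        (((t * ((1 - 4*c) * (u t)^2 + 4*t*(u t)*(ud t) - 4*(1-t^2)*(ud t)^2)) * (4 * σ t)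
          - H t * (4 * (-(2*t) / (2 * σ t)))) / (4 * σ t)^2) t :=
      (hHd t ht).div ((hσd t ht).const_mul 4) h4σne
    convert raw using 1
    set A := t * ((1 - 4*c) * (u t)^2 + 4*t*(u t)*(ud t) - 4*(1-t^2)*(ud t)^2) with hA
    have h1 : (A * (4 * σ t) - H t * (4 * (-(2*t) / (2 * σ t)))) / (4 * σ t)^2
        = (σ t^2 * A + t * H t) / (4 * σ t^3) := by
      field_simp
      ring
    have h2 : σ t^2 * A + t * H t = 2*t*(u t)^2 := by
      simp only [hA, hHdef, hPdef, hDdef]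
      linear_combination (t * ((1 - 4*c) * (u t)^2 + 4*t*(u t)*(ud t) - 4*(1-t^2)*(ud t)^2)) * (hσsq t ht)
    rw [h1, h2]
    ring
  -- derivative of E
  have hEd : ∀ t ∈ Set.Ioo (-1:ℝ) 1,
      HasDerivAt E (-(2*t*(D t)^2) / (σ t * (P t)^2)) t := by
    intro t ht
    have hσne : σ t ≠ 0 := ne_of_gt (hσpos t ht)
    have hPne : P t ≠ 0 := ne_of_gt (hPpos t ht)
    have raw : HasDerivAt E
        (((-(2*t) / (2 * σ t) * H t
            + σ t * (t * ((1 - 4*c) * (u t)^2 + 4*t*(u t)*(ud t) - 4*(1-t^2)*(ud t)^2))) * P t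
          - σ t * H t * (4*c*(-(2*t)))) / (P t)^2) t :=
      ((hσd t ht).mul (hHd t ht)).div (hPd t) hPne
    convert raw using 1
    set A := t * ((1 - 4*c) * (u t)^2 + 4*t*(u t)*(ud t) - 4*(1-t^2)*(ud t)^2) with hA
    have h1 : ((-(2*t) / (2 * σ t) * H t + σ t * A) * P t - σ t * H t * (4*c*(-(2*t)))) / (P t)^2
        = (P t*(σ t^2*A - t*H t) + 8*c*t*(σ t^2)*(H t)) / (σ t * (P t)^2) := by
      field_simp
      ring
    have h2 : P t*(σ t^2*A - t*H t) + 8*c*t*(σ t^2)*(H t) = -(2*t*(D t)^2) := by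
      simp only [hA, hHdef, hPdef, hDdef]
      linear_combination ((4*c*(1 - t^2) + 1) * (t * ((1 - 4*c) * (u t)^2 + 4*t*(u t)*(ud t)
        - 4*(1-t^2)*(ud t)^2)) + 8*c*t*((4*c*(1 - t^2) + 1) * (u t)^2
        + (t * u t - 2 * ((1 - t^2) * ud t))^2)) * (hσsq t ht)
    rw [h1, h2]
  -- monotonicity conclusions
  have hG0ξ : G 0 ≤ G ξ := by
    apply mono_aux hGd _ hξ
    intro t ht
    have hσt := hσpos t ht
    have : t * (t * u t ^ 2 / (2 * σ t ^ 3)) = t^2 * u t^2 / (2 * σ t ^ 3) := by ring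
    rw [this]
    positivity
  have hEx0 : E x ≤ E 0 := by
    have h := mono_aux (f := fun s => -(E s)) (f' := fun s => -(-(2*s*(D s)^2) / (σ s * (P s)^2)))
      (fun t ht => (hEd t ht).neg) ?_ hx
    · linarith
    · intro t ht
      have h1 := hσpos t ht
      have h2 := hPpos t ht
      have : t * -(-(2*t*(D t)^2) / (σ t * (P t)^2)) = 2*t^2*(D t)^2 / (σ t * (P t)^2) := by
        field_simp
      rw [this]
      positivity
  -- values
  have hσ0 : σ 0 = 1 := by simp [hσdef]
  have hE0 : E 0 = H 0 / (4*c+1) := by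
    simp only [hEdef, hPdef, hσ0]
    norm_num
  have hG0 : G 0 = H 0 / 4 := by
    simp only [hGdef, hσ0]
    norm_num
  have hDξ : D ξ = -2 := by
    simp only [hDdef, hu0]
    rw [hu1]; ring
  have hGξ : G ξ = 1 / σ ξ := by
    simp only [hGdef, hHdef, hDξ, hu0]
    rw [mul_comm 4 (σ ξ)]
    rw [div_eq_div_iff (by have := hσpos ξ hξ; positivity) (ne_of_gt (hσpos ξ hξ))]
    ring
  -- E x ≥ σ x * u x ^ 2
  have hExlb : σ x * (u x)^2 ≤ E x := by
    have hσx := hσpos x hx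
    have hPx := hPpos x hx
    have : E x = σ x * (u x)^2 + σ x * (D x)^2 / P x := by
      simp only [hEdef, hHdef]
      field_simp
    rw [this]
    have : 0 ≤ σ x * (D x)^2 / P x := by positivity
    linarith
  -- assemble
  have hσξ := hσpos ξ hξ
  have hσx := hσpos x hx
  have hc1 : (0:ℝ) < 4*c+1 := by linarith
  have hEx4 : E x ≤ 4 / (σ ξ * (4*c+1)) := by
    have h1 : E x ≤ H 0 / (4*c+1) := hE0 ▸ hEx0
    have h2 : H 0 / 4 ≤ 1 / σ ξ := hG0 ▸ hGξ ▸ hG0ξ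
    have h2' : H 0 * σ ξ ≤ 4 := by
      rw [div_le_div_iff₀ (by norm_num) hσξ] at h2
      linarith
    have h3 : H 0 / (4*c+1) ≤ 4 / (σ ξ * (4*c+1)) := by
      rw [div_le_div_iff₀ hc1 (by positivity)]
      nlinarith
    linarith
  have := mul_le_mul_of_nonneg_left hEx4 hσξ.le
  calc Real.sqrt (1-ξ^2) * Real.sqrt (1-x^2) * (u x)^2
      = σ ξ * (σ x * (u x)^2) := by rw [hσdef]; ring
    _ ≤ σ ξ * E x := by nlinarith
    _ ≤ σ ξ * (4 / (σ ξ * (4*c+1))) := this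
    _ = 4/(4*c+1) := by field_simp

/-- The inequality for (normalized pairs of solutions of) Legendre's equation:
    ((1−x²)(1−ξ²))^{1/4} |y₁(x) y₂(ξ) − y₁(ξ) y₂(x)| ≤ √(2/(1/4 + (ν+1/2)²)). -/
theorem stmt_12 (ν : ℝ) (y₁ y₁d y₁dd y₂ y₂d y₂dd : ℝ → ℝ)
    (hy₁d : ∀ x ∈ Set.Ioo (-1 : ℝ) 1, HasDerivAt y₁ (y₁d x) x)
    (hy₁dd : ∀ x ∈ Set.Ioo (-1 : ℝ) 1, HasDerivAt y₁d (y₁dd x) x)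
    (hy₂d : ∀ x ∈ Set.Ioo (-1 : ℝ) 1, HasDerivAt y₂ (y₂d x) x)
    (hy₂dd : ∀ x ∈ Set.Ioo (-1 : ℝ) 1, HasDerivAt y₂d (y₂dd x) x)
    (hode₁ : ∀ x ∈ Set.Ioo (-1 : ℝ) 1,
      (1 - x ^ 2) * y₁dd x - 2 * x * y₁d x + ν * (ν + 1) * y₁ x = 0)
    (hode₂ : ∀ x ∈ Set.Ioo (-1 : ℝ) 1,
      (1 - x ^ 2) * y₂dd x - 2 * x * y₂d x + ν * (ν + 1) * y₂ x = 0)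
    (hW : ∀ x ∈ Set.Ioo (-1 : ℝ) 1,
      (1 - x ^ 2) * (y₁d x * y₂ x - y₁ x * y₂d x) = 1) :
    ∀ x ∈ Set.Ioo (-1 : ℝ) 1, ∀ ξ ∈ Set.Ioo (-1 : ℝ) 1,
      ((1 - x ^ 2) * (1 - ξ ^ 2)) ^ ((1 : ℝ) / 4)
          * |y₁ x * y₂ ξ - y₁ ξ * y₂ x|
        ≤ Real.sqrt (2 / (1 / 4 + (ν + 1 / 2) ^ 2)) := by
  intro x hx ξ hξ
  have hkey : Real.sqrt (1-ξ^2) * Real.sqrt (1-x^2)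
      * ((fun t => y₁ t * y₂ ξ - y₁ ξ * y₂ t) x)^2 ≤ 4/(4*(ν+1/2)^2+1) := by
    apply key ((ν+1/2)^2) (sq_nonneg _) _ (fun t => y₁d t * y₂ ξ - y₁ ξ * y₂d t)
      (fun t => y₁dd t * y₂ ξ - y₁ ξ * y₂dd t) _ _ _ ξ hξ _ _ x hx
    · intro t ht
      exact ((hy₁d t ht).mul_const (y₂ ξ)).sub ((hy₂d t ht).const_mul (y₁ ξ))
    · intro t ht
      exact ((hy₁dd t ht).mul_const (y₂ ξ)).sub ((hy₂dd t ht).const_mul (y₁ ξ))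
    · intro t ht
      have h1 := hode₁ t ht
      have h2 := hode₂ t ht
      linear_combination (y₂ ξ) * h1 - (y₁ ξ) * h2
    · ring
    · linear_combination hW ξ hξ
  have hx2 : (0:ℝ) < 1 - x^2 := by nlinarith [hx.1, hx.2]
  have hξ2 : (0:ℝ) < 1 - ξ^2 := by nlinarith [hξ.1, hξ.2]
  have hz : (0:ℝ) < (1-x^2)*(1-ξ^2) := by positivity
  have hA : (0:ℝ) < 1/4 + (ν+1/2)^2 := by positivity
  have hL0 : 0 ≤ ((1 - x ^ 2) * (1 - ξ ^ 2)) ^ ((1 : ℝ) / 4)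
      * |y₁ x * y₂ ξ - y₁ ξ * y₂ x| :=
    mul_nonneg (Real.rpow_nonneg hz.le _) (abs_nonneg _)
  rw [Real.le_sqrt hL0 (by positivity)]
  have e1 : (((1-x^2)*(1-ξ^2)) ^ ((1:ℝ)/4))^2 = ((1-x^2)*(1-ξ^2)) ^ ((1:ℝ)/2) := by
    rw [← Real.rpow_natCast (((1-x^2)*(1-ξ^2)) ^ ((1:ℝ)/4)) 2, ← Real.rpow_mul hz.le]
    norm_num
  have e2 : ((1-x^2)*(1-ξ^2)) ^ ((1:ℝ)/2) = Real.sqrt (1-x^2) * Real.sqrt (1-ξ^2) := by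
    rw [← Real.sqrt_eq_rpow, Real.sqrt_mul hx2.le]
  rw [mul_pow, sq_abs, e1, e2]
  have hle : 4/(4*(ν+1/2)^2+1) ≤ 2 / (1/4 + (ν+1/2)^2) := by
    rw [div_le_div_iff₀ (by positivity) hA]
    nlinarith [sq_nonneg (ν+1/2)]
  calc Real.sqrt (1-x^2) * Real.sqrt (1-ξ^2) * (y₁ x * y₂ ξ - y₁ ξ * y₂ x)^2
      = Real.sqrt (1-ξ^2) * Real.sqrt (1-x^2) * ((fun t => y₁ t * y₂ ξ - y₁ ξ * y₂ t) x)^2 := by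
        ring
    _ ≤ 4/(4*(ν+1/2)^2+1) := hkey
    _ ≤ 2 / (1/4 + (ν+1/2)^2) := hle
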